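/- Let k be an algebraically closed field, r ≥ 1, and β : {1,…,r} → {0,1} a block function with s_j = #{i : β(i) = j}. If M is a brick for the cuspidal matrix problem, then the submatrix of M with rows {i : β(i) = 0} and columns {j : β(j) = 1} has maximal rank, i.e. rank equal to min(s₀, s₁). -/

import Mathlib

/-- An admissible matrix for the cuspidal matrix problem: block upper triangular. -/
def CuspAdmissible {k : Type*} [Field k] {r : ℕ} (β : Fin r → Fin 2)
    (M : Matrix (Fin r) (Fin r) k) : Prop :=
  ∀ i j, ¬ β i ≤ β j → M i j = 0

/-- A morphism `S` from an admissible matrix `M` to an admissible matrix `M'`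
in the cuspidal matrix problem. -/
def CuspHom {k : Type*} [Field k] {r : ℕ} (β : Fin r → Fin 2)
    (M M' S : Matrix (Fin r) (Fin r) k) : Prop :=
  (∀ i j, β i < β j → S i j = 0) ∧
  (∀ i j, β i ≤ β j → (S * M - M' * S) i j = 0)

/-- A brick for the cuspidal matrix problem. -/
def CuspBrick {k : Type*} [Field k] {r : ℕ} (β : Fin r → Fin 2)
    (M : Matrix (Fin r) (Fin r) k) : Prop :=
  CuspAdmissible β M ∧
    ∀ S : Matrix (Fin r) (Fin r) k, CuspHom β M M S →
      ∃ c : k, S = c • (1 : Matrix (Fin r) (Fin r) k)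

private lemma fin2_lt_iff (a b : Fin 2) : a < b ↔ a = 0 ∧ b = 1 := by
  revert a b; decide

private lemma exists_ne_zero_mulVec_eq_zero {k : Type*} [Field k] {m n : Type*}
    [Fintype m] [Fintype n] [DecidableEq n]
    (B : Matrix m n k) (h : B.rank < Fintype.card n) :
    ∃ v : n → k, v ≠ 0 ∧ B.mulVec v = 0 := by
  by_contra hc
  push_neg at hc
  have hker : LinearMap.ker B.mulVecLin = ⊥ := by
    rw [LinearMap.ker_eq_bot']
    intro v hv
    by_contra hv0
    exact hc v hv0 hv
  have h1 := LinearMap.finrank_range_add_finrank_ker B.mulVecLin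
  rw [hker, finrank_bot, add_zero, Module.finrank_pi] at h1
  have : B.rank = Fintype.card n := h1
  omega

private lemma sum_eq_sum_subtype {k : Type*} [Field k] {r : ℕ} (p : Fin r → Prop)
    [DecidablePred p] (g : Fin r → k) (hg : ∀ l, ¬ p l → g l = 0) :
    ∑ l, g l = ∑ l : Subtype p, g l.1 := by
  rw [← Finset.sum_subtype (Finset.univ.filter p) (fun x => by simp) g]
  exact (Finset.sum_filter_of_ne (fun x _ hx => by
    by_contra hpx; exact hx (hg x hpx))).symm

/-- For a brick of the cuspidal matrix problem, the block with rows in block 0 and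
columns in block 1 has maximal rank `min(s₀, s₁)` (Proposition 6.3 of the paper). -/
theorem cuspidal_brick_block_maximal_rank (k : Type*) [Field k] [IsAlgClosed k]
    (r : ℕ) (hr : 1 ≤ r) (β : Fin r → Fin 2)
    (M : Matrix (Fin r) (Fin r) k) (hM : CuspBrick β M) :
    (Matrix.of fun (i : {i : Fin r // β i = 0}) (j : {j : Fin r // β j = 1}) =>
        M i.1 j.1).rank =
      min (Fintype.card {i : Fin r // β i = 0}) (Fintype.card {j : Fin r // β j = 1}) := by
  classical
  set B : Matrix {i : Fin r // β i = 0} {j : Fin r // β j = 1} k :=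
    Matrix.of fun i j => M i.1 j.1 with hB
  refine le_antisymm (le_min (Matrix.rank_le_card_height B) (Matrix.rank_le_card_width B)) ?_
  by_contra hlt
  push_neg at hlt
  obtain ⟨v, hv0, hv⟩ := exists_ne_zero_mulVec_eq_zero B
    (lt_of_lt_of_le hlt (min_le_right _ _))
  obtain ⟨u, hu0, hu⟩ := exists_ne_zero_mulVec_eq_zero B.transpose
    (by rw [Matrix.rank_transpose]; exact lt_of_lt_of_le hlt (min_le_left _ _))
  rw [Matrix.mulVec_transpose] at hu
  set S : Matrix (Fin r) (Fin r) k :=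
    fun i j => if h : β i = 1 ∧ β j = 0 then v ⟨i, h.1⟩ * u ⟨j, h.2⟩ else 0 with hS
  have hSdef : ∀ i j, S i j =
      if h : β i = 1 ∧ β j = 0 then v ⟨i, h.1⟩ * u ⟨j, h.2⟩ else 0 := fun _ _ => rfl
  have hSne : ∀ i j, ¬ (β i = 1 ∧ β j = 0) → S i j = 0 := by
    intro i j h
    rw [hSdef, dif_neg h]
  have hSM : ∀ i j, β i = 0 → (S * M) i j = 0 := by
    intro i j hi
    simp only [Matrix.mul_apply]
    apply Finset.sum_eq_zero
    intro l _
    rw [hSne i l (by rintro ⟨h1, -⟩; rw [hi] at h1; exact absurd h1 (by decide)), zero_mul]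
  have hMS : ∀ i j, β j = 1 → (M * S) i j = 0 := by
    intro i j hj
    simp only [Matrix.mul_apply]
    apply Finset.sum_eq_zero
    intro l _
    rw [hSne l j (by rintro ⟨-, h2⟩; rw [hj] at h2; exact absurd h2 (by decide)), mul_zero]
  have hhom : CuspHom β M M S := by
    constructor
    · intro i j hij
      rw [fin2_lt_iff] at hij
      exact hSne i j (by rintro ⟨h1, -⟩; rw [hij.1] at h1; exact absurd h1 (by decide))
    · intro i j hij
      simp only [Matrix.sub_apply]
      rcases (show β i = 0 ∨ β i = 1 from by omega) with hi | hi
      · rw [hSM i j hi]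
        rcases (show β j = 0 ∨ β j = 1 from by omega) with hj | hj
        · -- (0,0) block : (M*S) i j = (B *ᵥ v) ⟨i⟩ * u ⟨j⟩ = 0
          have key : (M * S) i j = (B.mulVec v) ⟨i, hi⟩ * u ⟨j, hj⟩ := by
            simp only [Matrix.mul_apply, Matrix.mulVec, dotProduct]
            rw [Finset.sum_mul,
              sum_eq_sum_subtype (fun l => β l = 1) (fun l => M i l * S l j)
                (fun l hl => by
                  show M i l * S l j = 0
                  rw [hSne l j (by rintro ⟨h1, -⟩; exact hl h1), mul_zero])]
            refine Finset.sum_congr rfl fun l _ => ?_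
            show M i l.1 * S l.1 j = B ⟨i, hi⟩ l * v l * u ⟨j, hj⟩
            rw [hSdef, dif_pos ⟨l.2, hj⟩]
            show M i l.1 * (v l * u ⟨j, hj⟩) = M i l.1 * v l * u ⟨j, hj⟩
            ring
          rw [key, hv]
          simp
        · rw [hMS i j hj, sub_zero]
      · have hj : β j = 1 := by
          rcases (show β j = 0 ∨ β j = 1 from by omega) with hj | hj
          · exfalso; rw [hi, hj] at hij; exact absurd hij (by decide)
          · exact hj
        rw [hMS i j hj, sub_zero]
        have key : (S * M) i j = v ⟨i, hi⟩ * (Matrix.vecMul u B) ⟨j, hj⟩ := by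
          simp only [Matrix.mul_apply, Matrix.vecMul, dotProduct]
          rw [Finset.mul_sum,
            sum_eq_sum_subtype (fun l => β l = 0) (fun l => S i l * M l j)
              (fun l hl => by
                show S i l * M l j = 0
                rw [hSne i l (by rintro ⟨-, h2⟩; exact hl h2), zero_mul])]
          refine Finset.sum_congr rfl fun l _ => ?_
          show S i l.1 * M l.1 j = v ⟨i, hi⟩ * (u l * B l ⟨j, hj⟩)
          rw [hSdef, dif_pos ⟨hi, l.2⟩]
          show v ⟨i, hi⟩ * u l * M l.1 j = v ⟨i, hi⟩ * (u l * M l.1 j)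
          ring
        rw [key, hu]
        simp
  obtain ⟨c, hc⟩ := hM.2 S hhom
  obtain ⟨i0, hi0⟩ := Function.ne_iff.mp hv0
  obtain ⟨j0, hj0⟩ := Function.ne_iff.mp hu0
  simp only [Pi.zero_apply] at hi0 hj0
  have hij : (i0 : Fin r) ≠ (j0 : Fin r) := by
    intro h
    have h2 := i0.2
    rw [h, j0.2] at h2
    exact absurd h2 (by decide)
  have h1 : S i0.1 j0.1 = v i0 * u j0 := by
    rw [hSdef, dif_pos ⟨i0.2, j0.2⟩]
  have h2 : (c • (1 : Matrix (Fin r) (Fin r) k)) i0.1 j0.1 = 0 := by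
    simp [Matrix.one_apply_ne hij]
  rw [hc, h2] at h1
  exact (mul_ne_zero hi0 hj0) h1.symm
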